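/- Let 0 ≤ a < b ≤ 1 and ε ∈ (0,1). If n ≥ 2·log(1/ε)/(b-a)², then for any Boolean random variables X_1, ..., X_n satisfying Pr[∀ i ∈ S, X_i = 1] ≤ a^{|S|} for all S ⊆ {1,...,n}, we have Pr[∑ X_i ≥ n(a+b)/2] ≤ ε. -/

import Mathlib

open MeasureTheory Real

lemma hoeff_bernoulli' (a : ℝ) (ha : 0 ≤ a) (ha1 : a ≤ 1) (t : ℝ) (ht : 0 ≤ t) :
    1 - a + a * exp t ≤ exp (t * a + t ^ 2 / 8) := by
  set D : ℝ → ℝ := fun s => 1 - a + a * exp s with hDdef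
  have hD : ∀ s, 0 < D s := by
    intro s
    show 0 < 1 - a + a * exp s
    rcases lt_or_ge (exp s) 1 with h | h
    · nlinarith [exp_pos s, mul_nonneg (sub_nonneg.2 ha1) (exp_pos s).le]
    · nlinarith
  set g : ℝ → ℝ := fun s => a + s / 4 - a * exp s / D s with hgdef
  set f : ℝ → ℝ := fun s => s * a + s ^ 2 / 8 - log (D s) with hfdef
  have hDd : ∀ s, HasDerivAt D (a * exp s) s := by
    intro s
    have : HasDerivAt (fun s : ℝ => 1 - a + a * exp s) (a * exp s) s := by
      simpa using ((Real.hasDerivAt_exp s).const_mul a).const_add (1 - a)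
    exact this
  have hfd : ∀ s, HasDerivAt f (g s) s := by
    intro s
    have hlog : HasDerivAt (fun s => log (D s)) (a * exp s / D s) s := by
      simpa using (hDd s).log (hD s).ne'
    have h1 : HasDerivAt (fun s : ℝ => s * a + s ^ 2 / 8) (a + s / 4) s := by
      have := ((hasDerivAt_id s).mul_const a).add
        (((hasDerivAt_pow 2 s)).div_const 8)
      refine this.congr_deriv ?_
      norm_num
      ring
    exact h1.sub hlog
  have hgd : ∀ s, HasDerivAt g (1 / 4 - a * (1 - a) * exp s / (D s) ^ 2) s := by
    intro s
    have hq : HasDerivAt (fun s => a * exp s / D s)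
        ((a * exp s * D s - a * exp s * (a * exp s)) / (D s) ^ 2) s :=
      ((Real.hasDerivAt_exp s).const_mul a).div (hDd s) (hD s).ne'
    have h1 : HasDerivAt (fun s : ℝ => a + s / 4) (1 / 4) s := by
      simpa using ((hasDerivAt_id s).div_const 4).const_add a
    have := h1.sub hq
    refine (this.congr_deriv ?_)
    have : D s = 1 - a + a * exp s := rfl
    field_simp
    ring
  have hg0 : g 0 = 0 := by simp [hgdef, hDdef]
  have hgmono : Monotone g := by
    apply monotone_of_deriv_nonneg
    · exact fun s => (hgd s).differentiableAt
    · intro s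
      rw [(hgd s).deriv]
      have hDs : D s = 1 - a + a * exp s := rfl
      rw [hDs]
      have h2 : 4 * (a * (1 - a) * exp s) ≤ (1 - a + a * exp s) ^ 2 := by
        nlinarith [sq_nonneg ((1 - a) - a * exp s), exp_pos s,
          mul_nonneg ha (exp_pos s).le, sub_nonneg.2 ha1]
      have hDsq : 0 < (1 - a + a * exp s) ^ 2 := by
        have := hD s; rw [hDs] at this; positivity
      rw [sub_nonneg, div_le_iff₀ hDsq]
      linarith
  have hgpos : ∀ s, 0 ≤ s → 0 ≤ g s := fun s hs => hg0 ▸ hgmono hs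
  have hfmono : MonotoneOn f (Set.Ici 0) := by
    apply monotoneOn_of_deriv_nonneg (convex_Ici 0)
    · exact HasDerivAt.continuousOn (fun s _ => hfd s)
    · exact fun s _ => (hfd s).differentiableAt.differentiableWithinAt
    · intro s hs
      rw [interior_Ici] at hs
      rw [(hfd s).deriv]
      exact hgpos s (le_of_lt hs)
  have hf0 : f 0 = 0 := by simp [hfdef, hDdef]
  have hft : 0 ≤ f t := hf0 ▸ hfmono Set.self_mem_Ici ht ht
  have hlog : log (D t) ≤ t * a + t ^ 2 / 8 := by
    have heq : f t = t * a + t ^ 2 / 8 - log (D t) := rfl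
    rw [heq] at hft
    linarith
  calc D t = exp (log (D t)) := (exp_log (hD t)).symm
    _ ≤ exp (t * a + t ^ 2 / 8) := exp_le_exp.2 hlog


lemma measSum' {Ω : Type*} [Fintype Ω] [MeasurableSpace Ω] [MeasurableSingletonClass Ω]
    (μ : Measure Ω) [IsProbabilityMeasure μ] (A : Set Ω) [DecidablePred (· ∈ A)] :
    (μ A).toReal = ∑ ω ∈ Finset.univ.filter (· ∈ A), (μ {ω}).toReal := by
  have h1 : μ A = ∑ ω ∈ Finset.univ.filter (· ∈ A), μ {ω} := by
    rw [← measure_biUnion_finset]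
    · congr 1; ext x; simp
    · intro x _ y _ hxy; simp [Set.disjoint_singleton, hxy]
    · intro x _; exact measurableSet_singleton x
  rw [h1, ENNReal.toReal_sum]
  intro ω _
  exact (measure_lt_top μ _).ne

theorem soundness_error_below_eps
    (a b ε : ℝ) (ha : 0 ≤ a) (hab : a < b) (hb : b ≤ 1)
    (hε0 : 0 < ε) (hε1 : ε < 1) (n : ℕ)
    (hn : 2 * Real.log (1 / ε) / (b - a) ^ 2 ≤ (n : ℝ))
    {Ω : Type*} [Fintype Ω] [MeasurableSpace Ω] [MeasurableSingletonClass Ω]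
    (μ : Measure Ω) [IsProbabilityMeasure μ]
    (X : Fin n → Ω → ℕ) (hX : ∀ i ω, X i ω = 0 ∨ X i ω = 1)
    (h : ∀ S : Finset (Fin n),
      (μ {ω | ∀ i ∈ S, X i ω = 1}).toReal ≤ a ^ S.card) :
    (μ {ω | (n : ℝ) * (a + b) / 2 ≤ ∑ i, (X i ω : ℝ)}).toReal ≤ ε := by
  classical
  set t : ℝ := 2 * (b - a) with htdef
  have ht0 : 0 < t := by simp [htdef]; linarith
  set l : ℝ := exp t - 1 with hldef
  have hl0 : 0 < l := by
    have : 1 < exp t := by rw [← exp_zero]; exact exp_lt_exp.2 ht0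
    simp [hldef]; linarith
  set c : ℝ := (a + b) / 2 with hcdef
  set A : Set Ω := {ω | (n : ℝ) * (a + b) / 2 ≤ ∑ i, (X i ω : ℝ)} with hAdef
  set p : Ω → ℝ := fun ω => (μ {ω}).toReal with hpdef
  have hp0 : ∀ ω, 0 ≤ p ω := fun ω => ENNReal.toReal_nonneg
  -- product expansion and expectation bound
  have hprodeq : ∀ ω, ∏ i, (1 + l * (X i ω : ℝ)) =
      ∑ S ∈ (Finset.univ : Finset (Fin n)).powerset,
        l ^ S.card * ∏ i ∈ S, (X i ω : ℝ) := by
    intro ω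
    have := Finset.prod_add (fun i => l * (X i ω : ℝ)) (fun _ => (1 : ℝ)) Finset.univ
    simp only [Finset.prod_const_one, mul_one] at this
    rw [show (fun i => 1 + l * (X i ω : ℝ)) = fun i => (l * (X i ω : ℝ)) + 1 from
      funext fun i => by ring] at *
    rw [this]
    refine Finset.sum_congr rfl fun S _ => ?_
    rw [Finset.prod_mul_distrib, Finset.prod_const]
  have hindic : ∀ (S : Finset (Fin n)) ω, (∏ i ∈ S, (X i ω : ℝ)) =
      if ∀ i ∈ S, X i ω = 1 then 1 else 0 := by
    intro S ω
    by_cases hc : ∀ i ∈ S, X i ω = 1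
    · rw [if_pos hc]
      exact Finset.prod_eq_one fun i hi => by rw [hc i hi]; norm_num
    · rw [if_neg hc]
      push_neg at hc
      obtain ⟨i, hiS, hi1⟩ := hc
      have : X i ω = 0 := (hX i ω).resolve_right hi1
      exact Finset.prod_eq_zero hiS (by rw [this]; norm_num)
  have hexp_S : ∀ S : Finset (Fin n),
      ∑ ω, p ω * ∏ i ∈ S, (X i ω : ℝ) ≤ a ^ S.card := by
    intro S
    calc ∑ ω, p ω * ∏ i ∈ S, (X i ω : ℝ)
        = ∑ ω ∈ Finset.univ.filter (· ∈ {ω | ∀ i ∈ S, X i ω = 1}), p ω := by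
          rw [Finset.sum_filter]
          refine Finset.sum_congr rfl fun ω _ => ?_
          rw [hindic S ω]
          by_cases hc : ∀ i ∈ S, X i ω = 1 <;> simp [hc, Set.mem_setOf_eq]
      _ = (μ {ω | ∀ i ∈ S, X i ω = 1}).toReal := (measSum' μ _).symm
      _ ≤ a ^ S.card := h S
  have hE : ∑ ω, p ω * ∏ i, (1 + l * (X i ω : ℝ)) ≤ (1 + l * a) ^ n := by
    have expand : ∑ ω, p ω * ∏ i, (1 + l * (X i ω : ℝ)) =
        ∑ S ∈ (Finset.univ : Finset (Fin n)).powerset,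
          l ^ S.card * ∑ ω, p ω * ∏ i ∈ S, (X i ω : ℝ) := by
      simp_rw [hprodeq, Finset.mul_sum]
      rw [Finset.sum_comm]
      exact Finset.sum_congr rfl fun S _ =>
        Finset.sum_congr rfl fun ω _ => by ring
    rw [expand]
    have hbinom : (1 + l * a) ^ n =
        ∑ S ∈ (Finset.univ : Finset (Fin n)).powerset, l ^ S.card * a ^ S.card := by
      have h0 := Finset.prod_add (fun _ : Fin n => l * a) (fun _ => (1 : ℝ)) Finset.univ
      simp only [Finset.prod_const_one, mul_one] at h0
      calc (1 + l * a) ^ n = ∏ _i : Fin n, (l * a + 1) := by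
            rw [Finset.prod_const, Finset.card_univ, Fintype.card_fin, add_comm]
        _ = ∑ S ∈ (Finset.univ : Finset (Fin n)).powerset, ∏ _i ∈ S, (l * a) := h0
        _ = ∑ S ∈ (Finset.univ : Finset (Fin n)).powerset, l ^ S.card * a ^ S.card := by
            refine Finset.sum_congr rfl fun S _ => ?_
            rw [Finset.prod_const, mul_pow]
    rw [hbinom]
    refine Finset.sum_le_sum fun S _ => ?_
    exact mul_le_mul_of_nonneg_left (hexp_S S) (pow_nonneg hl0.le _)
  -- Markov
  have hfactor : ∀ ω, ∏ i, (1 + l * (X i ω : ℝ)) = exp (t * ∑ i, (X i ω : ℝ)) := by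
    intro ω
    have heach : ∀ i, 1 + l * (X i ω : ℝ) = exp (t * (X i ω : ℝ)) := by
      intro i
      rcases hX i ω with h0 | h1
      · simp [h0]
      · simp [h1, hldef]
    simp_rw [heach, ← Real.exp_sum, Finset.mul_sum]
  have hmarkov : (μ A).toReal * exp (t * ((n : ℝ) * c)) ≤
      ∑ ω, p ω * ∏ i, (1 + l * (X i ω : ℝ)) := by
    rw [measSum' μ A, Finset.sum_mul]
    calc ∑ ω ∈ Finset.univ.filter (· ∈ A), p ω * exp (t * ((n : ℝ) * c))
        ≤ ∑ ω ∈ Finset.univ.filter (· ∈ A), p ω * ∏ i, (1 + l * (X i ω : ℝ)) := by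
          refine Finset.sum_le_sum fun ω hω => ?_
          have hωA : ω ∈ A := (Finset.mem_filter.1 hω).2
          have : (n : ℝ) * (a + b) / 2 ≤ ∑ i, (X i ω : ℝ) := hωA
          rw [hfactor ω]
          refine mul_le_mul_of_nonneg_left ?_ (hp0 ω)
          apply exp_le_exp.2
          have : (n : ℝ) * c ≤ ∑ i, (X i ω : ℝ) := by
            rw [hcdef]; linarith [this]
          nlinarith [ht0]
      _ ≤ ∑ ω, p ω * ∏ i, (1 + l * (X i ω : ℝ)) := by
          refine Finset.sum_le_sum_of_subset_of_nonneg (Finset.filter_subset _ _)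
            fun ω _ _ => ?_
          refine mul_nonneg (hp0 ω) (Finset.prod_nonneg fun i _ => ?_)
          positivity
  -- combine
  have hchain : (μ A).toReal * exp (t * ((n : ℝ) * c)) ≤ (1 + l * a) ^ n :=
    le_trans hmarkov hE
  have hhoeff : (1 + l * a) ^ n ≤ exp (t * a + t ^ 2 / 8) ^ n := by
    apply pow_le_pow_left₀
    · positivity
    · have := hoeff_bernoulli' a ha (le_trans hab.le hb) t ht0.le
      rw [hldef]; linarith [this]
  have hkey : (μ A).toReal ≤ exp ((n : ℝ) * (t * a + t ^ 2 / 8) - t * ((n : ℝ) * c)) := by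
    have he1 : exp (t * a + t ^ 2 / 8) ^ n = exp ((n : ℝ) * (t * a + t ^ 2 / 8)) := by
      rw [← Real.exp_nat_mul]
    have hpos : 0 < exp (t * ((n : ℝ) * c)) := exp_pos _
    have := le_trans hchain (he1 ▸ hhoeff)
    rw [exp_sub]
    rw [le_div_iff₀ hpos]
    exact this
  have hexpval : (n : ℝ) * (t * a + t ^ 2 / 8) - t * ((n : ℝ) * c) =
      -(n : ℝ) * (b - a) ^ 2 / 2 := by
    rw [htdef, hcdef]; ring
  rw [hexpval] at hkey
  refine le_trans hkey ?_
  have hba : 0 < (b - a) ^ 2 := pow_pos (sub_pos.2 hab) 2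
  have hlog : 2 * Real.log (1 / ε) ≤ (n : ℝ) * (b - a) ^ 2 := by
    rw [div_le_iff₀ hba] at hn; linarith
  have : -(n : ℝ) * (b - a) ^ 2 / 2 ≤ Real.log ε := by
    rw [one_div, Real.log_inv] at hlog
    linarith
  calc exp (-(n : ℝ) * (b - a) ^ 2 / 2) ≤ exp (Real.log ε) := exp_le_exp.2 this
    _ = ε := exp_log hε0
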